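/- The underlying undirected graph G_n of D_n' has clique number at most 3. -/

import Mathlib

/-- Vertex set of the digraph `D (n+1)` from the paper (`Vtx n` = vertices of `D_{n+1}`). -/
def Vtx : ℕ → Type
  | 0 => Unit
  | (n+1) => (Fin (n+1) × Vtx n) ⊕ ((i : Fin (n+1)) → Vtx n)

/-- Edge relation of `D_{n+1}`. -/
def DEdge : (n : ℕ) → Vtx n → Vtx n → Prop
  | 0, _, _ => False
  | (n+1), Sum.inl (i, x), Sum.inl (j, y) => i = j ∧ DEdge n x y
  | (n+1), Sum.inl (i, x), Sum.inr T => T i = x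
  | (_+1), Sum.inr _, _ => False

/-- There is a directed walk of length `k` from `u` to `v`. -/
def WalkLen {V : Type*} (E : V → V → Prop) (u v : V) (k : ℕ) : Prop :=
  ∃ f : Fin (k+1) → V, f 0 = u ∧ f (Fin.last k) = v ∧
    ∀ i : Fin k, E (f i.castSucc) (f i.succ)

/-- `l` is a directed path (as a list of distinct vertices) from `u` to `v`. -/
def IsDPath {V : Type*} (E : V → V → Prop) (u v : V) (l : List V) : Prop :=
  l.Chain' E ∧ l.Nodup ∧ l.head? = some u ∧ l.getLast? = some v

/-- Positive edges of `D'`. -/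
def PosE {V : Type*} (E : V → V → Prop) (u v : V) : Prop :=
  ∃ k, k % 3 = 1 ∧ WalkLen E u v k

/-- Negative edges of `D'`. -/
def NegE {V : Type*} (E : V → V → Prop) (u v : V) : Prop :=
  ∃ k, k % 3 = 2 ∧ WalkLen E v u k

/-- Edge relation of `D_{n+1}'`. -/
def DEdge' (n : ℕ) (u v : Vtx n) : Prop :=
  PosE (DEdge n) u v ∨ NegE (DEdge n) u v

/-- Underlying undirected graph of a digraph. -/
def underSG {V : Type*} (E : V → V → Prop) : SimpleGraph V :=
  SimpleGraph.fromRel E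

/-- `G_{n+1}`, the underlying undirected graph of `D_{n+1}'`. -/
def Gn (n : ℕ) : SimpleGraph (Vtx n) := underSG (DEdge' n)

/-- A digraph is acyclic iff no vertex lies on a directed cycle. -/
def DAcyclic {V : Type*} (E : V → V → Prop) : Prop :=
  ∀ v : V, ¬ Relation.TransGen E v v

/-- `k`-dicolorability. -/
def Dicolorable {V : Type*} (E : V → V → Prop) (k : ℕ) : Prop :=
  ∃ f : V → Fin k, ∀ c : Fin k,
    DAcyclic (fun a b => E a b ∧ f a = c ∧ f b = c)

/-- `D` has an induced directed cycle of odd length at least 5. -/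
def HasInducedOddCycle {V : Type*} (E : V → V → Prop) : Prop :=
  ∃ m : ℕ, 5 ≤ m ∧ Odd m ∧ ∃ f : ZMod m → V, Function.Injective f ∧
    (∀ i, E (f i) (f (i+1))) ∧ (∀ i j, E (f i) (f j) → j = i + 1)

section Walks

variable {V : Type*} {E : V → V → Prop}

lemma walklen_zero {u v : V} : WalkLen E u v 0 ↔ u = v := by
  constructor
  · rintro ⟨f, h0, hl, -⟩
    rw [← h0, ← hl]
    rfl
  · rintro rfl
    exact ⟨fun _ => u, rfl, rfl, fun i => i.elim0⟩

lemma walklen_succ {u v : V} {k : ℕ} :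
    WalkLen E u v (k+1) ↔ ∃ w, E u w ∧ WalkLen E w v k := by
  constructor
  · rintro ⟨f, h0, hl, hstep⟩
    refine ⟨f 1, ?_, f ∘ Fin.succ, rfl, ?_, fun i => ?_⟩
    · have h := hstep 0
      simpa [h0] using h
    · simpa [Function.comp, Fin.succ_last] using hl
    · have h := hstep i.succ
      simpa only [Function.comp_apply, Fin.succ_castSucc] using h
  · rintro ⟨w, hE, g, h0, hl, hstep⟩
    refine ⟨Fin.cases u g, Fin.cases_zero, ?_, fun i => ?_⟩
    · have hlast : Fin.last (k+1) = Fin.succ (Fin.last k) := rfl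
      simp only [hlast, Fin.cases_succ]
      exact hl
    · induction i using Fin.cases with
      | zero =>
        simp only [Fin.castSucc_zero, Fin.cases_zero, Fin.cases_succ, h0]
        exact hE
      | succ j =>
        simp only [← Fin.succ_castSucc, Fin.cases_succ]
        exact hstep j

lemma walklen_comp {u v w : V} {k l : ℕ}
    (h1 : WalkLen E u v k) (h2 : WalkLen E v w l) : WalkLen E u w (k + l) := by
  induction k generalizing u with
  | zero => rwa [walklen_zero.mp h1, Nat.zero_add]
  | succ k ih =>
    obtain ⟨x, hx, hw⟩ := walklen_succ.mp h1
    have : WalkLen E x w (k + l) := ih hw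
    have : WalkLen E u w ((k + l) + 1) := walklen_succ.mpr ⟨x, hx, this⟩
    simpa [Nat.succ_add] using this

end Walks

/-- A rank function for the digraph `D_{n+1}`. -/
def rnk : (n : ℕ) → Vtx n → ℕ
  | 0, _ => 0
  | (n+1), Sum.inl (_, x) => rnk n x
  | (n+1), Sum.inr T => (Finset.univ.sup fun i => rnk n (T i)) + 1

lemma rnk_lt : ∀ (n : ℕ) (u v : Vtx n), DEdge n u v → rnk n u < rnk n v := by
  intro n
  induction n with
  | zero => intro u v h; exact absurd h (by simp [DEdge])
  | succ n ih =>
    rintro (⟨i, x⟩ | T) (⟨j, y⟩ | T') h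
    · exact ih x y h.2
    · obtain rfl := h
      have h := Finset.le_sup (f := fun i => rnk n (T' i)) (Finset.mem_univ i)
      exact Nat.lt_succ_of_le h
    · exact absurd h (by simp [DEdge])
    · exact absurd h (by simp [DEdge])

lemma rnk_walk {n : ℕ} {u v : Vtx n} {k : ℕ} (h : WalkLen (DEdge n) u v k) :
    rnk n u + k ≤ rnk n v := by
  induction k generalizing u with
  | zero => simp [walklen_zero.mp h]
  | succ k ih =>
    obtain ⟨w, hw, h'⟩ := walklen_succ.mp h
    have h1 := rnk_lt n u w hw
    have h2 := ih h'
    omega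

lemma walk_self {n : ℕ} {u : Vtx n} {k : ℕ} (h : WalkLen (DEdge n) u u k) : k = 0 := by
  have := rnk_walk h; omega

lemma walk_from_inr {n : ℕ} {T : (i : Fin (n+1)) → Vtx n} {v : Vtx (n+1)} {k : ℕ}
    (h : WalkLen (DEdge (n+1)) (Sum.inr T) v k) : k = 0 ∧ v = Sum.inr T := by
  cases k with
  | zero => exact ⟨rfl, (walklen_zero.mp h).symm⟩
  | succ k =>
    obtain ⟨w, hw, -⟩ := walklen_succ.mp h
    exact absurd hw (by simp [DEdge])

lemma walk_structure {n : ℕ} {i : Fin (n+1)} {x : Vtx n} {v : Vtx (n+1)} {k : ℕ}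
    (h : WalkLen (DEdge (n+1)) (Sum.inl (i, x)) v k) :
    (∃ y, v = Sum.inl (i, y) ∧ WalkLen (DEdge n) x y k) ∨
    (∃ T m, v = Sum.inr T ∧ k = m + 1 ∧ WalkLen (DEdge n) x (T i) m) := by
  induction k generalizing x with
  | zero =>
    exact Or.inl ⟨x, (walklen_zero.mp h).symm, walklen_zero.mpr rfl⟩
  | succ k ih =>
    obtain ⟨w, hw, h'⟩ := walklen_succ.mp h
    rcases w with ⟨j, y⟩ | T
    · obtain ⟨rfl, hxy⟩ : i = j ∧ DEdge n x y := hw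
      rcases ih h' with ⟨z, rfl, hz⟩ | ⟨T, m, rfl, rfl, hm⟩
      · exact Or.inl ⟨z, rfl, walklen_succ.mpr ⟨y, hxy, hz⟩⟩
      · exact Or.inr ⟨T, m + 1, rfl, rfl, walklen_succ.mpr ⟨y, hxy, hm⟩⟩
    · have hTx : T i = x := hw
      obtain ⟨rfl, rfl⟩ := walk_from_inr h'
      exact Or.inr ⟨T, 0, rfl, rfl, walklen_zero.mpr hTx.symm⟩

lemma walk_uniq : ∀ (n : ℕ) (u v : Vtx n) (k k' : ℕ),
    WalkLen (DEdge n) u v k → WalkLen (DEdge n) u v k' → k = k' := by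
  intro n
  induction n with
  | zero =>
    intro u v k k' h h'
    have hz : ∀ m, WalkLen (DEdge 0) u v m → m = 0 := by
      intro m hm
      cases m with
      | zero => rfl
      | succ m =>
        obtain ⟨w, hw, -⟩ := walklen_succ.mp hm
        exact absurd hw (by simp [DEdge])
    rw [hz k h, hz k' h']
  | succ n ih =>
    rintro (⟨i, x⟩ | T) v k k' h h'
    · rcases walk_structure h with ⟨y, rfl, hy⟩ | ⟨T, m, rfl, rfl, hm⟩
      · rcases walk_structure h' with ⟨y', hy', hw'⟩ | ⟨T', m', hT', -, -⟩
        · obtain ⟨-, rfl⟩ := Prod.mk.inj (Sum.inl.inj hy')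
          exact ih x y k k' hy hw'
        · simp at hT'
      · rcases walk_structure h' with ⟨y', hy', -⟩ | ⟨T', m', hT', rfl, hm'⟩
        · simp at hy'
        · obtain rfl := Sum.inr.inj hT'
          rw [ih x (T i) m m' hm hm']
    · obtain ⟨rfl, -⟩ := walk_from_inr h
      obtain ⟨rfl, -⟩ := walk_from_inr h'
      rfl

lemma adj_walk {n : ℕ} {u v : Vtx n} (h : (Gn n).Adj u v) :
    ∃ k, k % 3 ≠ 0 ∧ (WalkLen (DEdge n) u v k ∨ WalkLen (DEdge n) v u k) := by
  rw [Gn, underSG, SimpleGraph.fromRel_adj] at h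
  rcases h.2 with (⟨k, hk, hw⟩ | ⟨k, hk, hw⟩) | (⟨k, hk, hw⟩ | ⟨k, hk, hw⟩)
  · exact ⟨k, by omega, Or.inl hw⟩
  · exact ⟨k, by omega, Or.inr hw⟩
  · exact ⟨k, by omega, Or.inr hw⟩
  · exact ⟨k, by omega, Or.inl hw⟩

lemma adj_forward {n : ℕ} {u v : Vtx n} {k : ℕ} (h : (Gn n).Adj u v)
    (hw : WalkLen (DEdge n) u v k) (hk : 1 ≤ k) : k % 3 ≠ 0 := by
  obtain ⟨k', h3, hor⟩ := adj_walk h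
  rcases hor with h' | h'
  · rwa [walk_uniq n u v k k' hw h']
  · have := walk_self (walklen_comp hw h')
    omega

/-- Nontrivial reachability. -/
def Rch (n : ℕ) (u v : Vtx n) : Prop := ∃ k, 1 ≤ k ∧ WalkLen (DEdge n) u v k

lemma rch_trans {n : ℕ} {u v w : Vtx n} (h1 : Rch n u v) (h2 : Rch n v w) : Rch n u w := by
  obtain ⟨k, hk, hw1⟩ := h1
  obtain ⟨l, hl, hw2⟩ := h2
  exact ⟨k + l, by omega, walklen_comp hw1 hw2⟩

lemma rch_ne {n : ℕ} {u v : Vtx n} (h : Rch n u v) : u ≠ v := by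
  rintro rfl
  obtain ⟨k, hk, hw⟩ := h
  have := walk_self hw
  omega

lemma insert3 {V : Type*} (P : V → V → Prop) (Q : V → Prop) {p q r d : V}
    (Qp : Q p) (Qq : Q q) (Qr : Q r) (Qd : Q d)
    (hpq : P p q) (hqr : P q r)
    (h1 : P p d ∨ P d p) (h2 : P q d ∨ P d q) (h3 : P r d ∨ P d r) :
    ∃ w x y z, Q w ∧ Q x ∧ Q y ∧ Q z ∧ P w x ∧ P x y ∧ P y z := by
  rcases h1 with h1 | h1
  · rcases h2 with h2 | h2
    · rcases h3 with h3 | h3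
      · exact ⟨p, q, r, d, Qp, Qq, Qr, Qd, hpq, hqr, h3⟩
      · exact ⟨p, q, d, r, Qp, Qq, Qd, Qr, hpq, h2, h3⟩
    · exact ⟨p, d, q, r, Qp, Qd, Qq, Qr, h1, h2, hqr⟩
  · exact ⟨d, p, q, r, Qd, Qp, Qq, Qr, h1, hpq, hqr⟩

lemma sort4 {V : Type*} (P : V → V → Prop) (Q : V → Prop) {a b c d : V}
    (Qa : Q a) (Qb : Q b) (Qc : Q c) (Qd : Q d)
    (hab : P a b ∨ P b a) (hac : P a c ∨ P c a) (had : P a d ∨ P d a)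
    (hbc : P b c ∨ P c b) (hbd : P b d ∨ P d b) (hcd : P c d ∨ P d c) :
    ∃ w x y z, Q w ∧ Q x ∧ Q y ∧ Q z ∧ P w x ∧ P x y ∧ P y z := by
  rcases hab with h1 | h1 <;> rcases hac with h2 | h2 <;> rcases hbc with h3 | h3
  · exact insert3 P Q Qa Qb Qc Qd h1 h3 had hbd hcd
  · exact insert3 P Q Qa Qc Qb Qd h2 h3 had hcd hbd
  · exact insert3 P Q Qa Qb Qc Qd h1 h3 had hbd hcd
  · exact insert3 P Q Qc Qa Qb Qd h2 h1 hcd had hbd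
  · exact insert3 P Q Qb Qa Qc Qd h1 h2 hbd had hcd
  · exact insert3 P Q Qa Qc Qb Qd h2 h3 had hcd hbd
  · exact insert3 P Q Qb Qc Qa Qd h3 h2 hbd hcd had
  · exact insert3 P Q Qc Qb Qa Qd h3 h1 hcd hbd had


/-- `G_n` has clique number at most 3, i.e. contains no 4-clique. -/
theorem Gn_clique (n : ℕ) (s : Finset (Vtx n)) : ¬ (Gn n).IsNClique 4 s := by
  rintro ⟨hclique, hcard⟩
  classical
  have h0 : s.Nonempty := by rw [← Finset.card_pos, hcard]; norm_num
  obtain ⟨a, ha⟩ := h0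
  have hcard3 : (s.erase a).card = 3 := by rw [Finset.card_erase_of_mem ha, hcard]
  obtain ⟨b, c, d, hbc, hbd, hcd, he⟩ := Finset.card_eq_three.mp hcard3
  have hbe : b ∈ s.erase a := by rw [he]; simp
  have hce : c ∈ s.erase a := by rw [he]; simp
  have hde : d ∈ s.erase a := by rw [he]; simp
  have hb : b ∈ s := Finset.mem_of_mem_erase hbe
  have hc : c ∈ s := Finset.mem_of_mem_erase hce
  have hd : d ∈ s := Finset.mem_of_mem_erase hde
  have hab : a ≠ b := (Finset.ne_of_mem_erase hbe).symm
  have hac : a ≠ c := (Finset.ne_of_mem_erase hce).symm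
  have had : a ≠ d := (Finset.ne_of_mem_erase hde).symm
  have comp : ∀ u ∈ s, ∀ v ∈ s, u ≠ v → Rch n u v ∨ Rch n v u := by
    intro u hu v hv hne
    obtain ⟨k, hk, hor⟩ := adj_walk (hclique hu hv hne)
    rcases hor with h | h
    · exact Or.inl ⟨k, by omega, h⟩
    · exact Or.inr ⟨k, by omega, h⟩
  obtain ⟨w, x, y, z, hw, hx, hy, hz, Pwx, Pxy, Pyz⟩ :=
    sort4 (Rch n) (· ∈ s) ha hb hc hd
      (comp a ha b hb hab) (comp a ha c hc hac) (comp a ha d hd had)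
      (comp b hb c hc hbc) (comp b hb d hd hbd) (comp c hc d hd hcd)
  have Pwy := rch_trans Pwx Pxy
  have Pxz := rch_trans Pxy Pyz
  have Pwz := rch_trans Pwx Pxz
  have Awx := hclique hw hx (rch_ne Pwx)
  have Axy := hclique hx hy (rch_ne Pxy)
  have Ayz := hclique hy hz (rch_ne Pyz)
  have Awy := hclique hw hy (rch_ne Pwy)
  have Axz := hclique hx hz (rch_ne Pxz)
  have Awz := hclique hw hz (rch_ne Pwz)
  obtain ⟨ka, hka, wka⟩ := Pwx
  obtain ⟨kb, hkb, wkb⟩ := Pxy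
  obtain ⟨kc, hkc, wkc⟩ := Pyz
  have h1 := adj_forward Awx wka hka
  have h2 := adj_forward Axy wkb hkb
  have h3 := adj_forward Ayz wkc hkc
  have h12 := adj_forward Awy (walklen_comp wka wkb) (by omega)
  have h23 := adj_forward Axz (walklen_comp wkb wkc) (by omega)
  have h123 := adj_forward Awz (walklen_comp wka (walklen_comp wkb wkc)) (by omega)
  omega
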